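/- Let 0 ≤ ℓ ≤ n be integers and let u : ℝ^d → ℂ be a C^n function such that sup_x ⟨x⟩^s |u(x)| < ∞ and sup_{|α|=n} sup_x ⟨x⟩^r |∂^α u(x)| < ∞ for some s, r ≥ 0. Then for every multi-index α with |α| = ℓ, one has sup_x ⟨x⟩^ν |∂^α u(x)| < ∞ where ν = (1−ℓ/n)s + (ℓ/n)r. -/

import Mathlib

open MeasureTheory

noncomputable def jap {d : ℕ} (x : EuclideanSpace ℝ (Fin d)) : ℝ := Real.sqrt (1 + ‖x‖^2)

/-- First-order partial derivative in the `i`-th coordinate direction. -/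
noncomputable def pd {d : ℕ} (i : Fin d) (f : EuclideanSpace ℝ (Fin d) → ℂ) :
    EuclideanSpace ℝ (Fin d) → ℂ :=
  fun x => fderiv ℝ f x (EuclideanSpace.single i 1)

/-- The partial derivative `∂^α` associated with a multi-index `α`. -/
noncomputable def mderiv {d : ℕ} (α : Fin d → ℕ) (f : EuclideanSpace ℝ (Fin d) → ℂ) :
    EuclideanSpace ℝ (Fin d) → ℂ :=
  (List.finRange d).foldr (fun i g => (pd i)^[α i] g) f

section WeightedInterp

open Finset Matrix

-- iteratedDerivWithin = iteratedDeriv for globally smooth functions on unique-diff sets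
lemma idw_eq {g : ℝ → ℂ} {m : ℕ} (hg : ContDiff ℝ (m:ℕ∞) g) {s : Set ℝ}
    (hs : UniqueDiffOn ℝ s) {x : ℝ} (hx : x ∈ s) {t : ℕ} (ht : t ≤ m) :
    iteratedDerivWithin t g s x = iteratedDeriv t g x := by
  rw [iteratedDerivWithin_eq_iteratedFDerivWithin, iteratedDeriv_eq_iteratedFDeriv]
  congr 1
  have H := (contDiff_iff_ftaylorSeries.mp hg).hasFTaylorSeriesUpToOn s
  exact (H.eq_iteratedFDerivWithin_of_uniqueDiffOn (by exact_mod_cast ht) hs hx).symm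

-- Vandermonde coefficients
lemma vand_coeffs (m k : ℕ) (hk : k < m) :
    ∃ c : Fin m → ℝ, ∀ t : ℕ, t < m →
      ∑ j : Fin m, c j * (j : ℝ) ^ t = if t = k then (k.factorial : ℝ) else 0 := by
  set M : Matrix (Fin m) (Fin m) ℝ := fun t j => (j : ℝ) ^ (t : ℕ) with hM
  have hdet : IsUnit M.det := by
    have : M = (Matrix.vandermonde (fun j : Fin m => (j : ℝ))).transpose := by
      ext t j; simp [hM, Matrix.vandermonde]
    rw [this, Matrix.det_transpose]
    refine (Matrix.det_vandermonde_ne_zero_iff.mpr ?_).isUnit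
    intro a b hab
    simp only [] at hab; exact Fin.ext (by exact_mod_cast hab)
  set y : Fin m → ℝ := fun t => if (t : ℕ) = k then (k.factorial : ℝ) else 0 with hy
  refine ⟨M⁻¹ *ᵥ y, ?_⟩
  intro t ht
  have h1 : M *ᵥ (M⁻¹ *ᵥ y) = y := by
    rw [Matrix.mulVec_mulVec, Matrix.mul_nonsing_inv M hdet, Matrix.one_mulVec]
  have h2 := congrFun h1 ⟨t, ht⟩
  simpa [Matrix.mulVec, dotProduct, hM, hy, mul_comm] using h2

lemma oneD (m k : ℕ) (hm : 0 < m) (hk : k ≤ m) :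
    ∃ K : ℝ, 0 < K ∧ ∀ (g : ℝ → ℂ) (A B h : ℝ), ContDiff ℝ (m:ℕ∞) g → 0 < h →
      0 ≤ A → 0 ≤ B → (∀ t : ℝ, 0 ≤ t → ‖g t‖ ≤ A) →
      (∀ t : ℝ, 0 ≤ t → ‖iteratedDeriv m g t‖ ≤ B) →
      ‖iteratedDeriv k g 0‖ ≤ K * (A / h ^ k + B * h ^ (m - k)) := by
  rcases eq_or_lt_of_le hk with rfl | hkm
  · -- k = m : trivial
    refine ⟨1, one_pos, fun g A B h hg hh hA hB h0 hm' => ?_⟩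
    have := hm' 0 le_rfl
    have h1 : 0 ≤ A / h ^ k := by positivity
    simp only [Nat.sub_self, pow_zero, mul_one, one_mul]
    linarith
  rcases Nat.eq_zero_or_pos k with rfl | hk0
  · -- k = 0 : trivial
    refine ⟨1, one_pos, fun g A B h hg hh hA hB h0 hm' => ?_⟩
    have := h0 0 le_rfl
    have h1 : 0 ≤ B * h ^ (m - 0) := by positivity
    simp only [iteratedDeriv_zero, pow_zero, div_one, one_mul]
    linarith
  -- main case 0 < k < m
  obtain ⟨p, rfl⟩ : ∃ p, m = p + 1 := ⟨m - 1, (Nat.succ_pred_eq_of_pos hm).symm⟩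
  set m := p + 1
  have hp : 1 ≤ p := by omega
  obtain ⟨c, hc⟩ := vand_coeffs m k hkm
  set S : ℝ := ∑ j : Fin m, |c j| with hS
  have hS0 : 0 ≤ S := Finset.sum_nonneg fun j _ => abs_nonneg _
  have hmm : (1:ℝ) ≤ (m:ℝ) ^ m := one_le_pow₀ (by exact_mod_cast Nat.one_le_iff_ne_zero.mpr (by omega))
  refine ⟨S * (1 + (m:ℝ) ^ m) + 1, by positivity, fun g A B h hg hh hA hB h0 hm' => ?_⟩
  set K : ℝ := S * (1 + (m:ℝ) ^ m) + 1 with hK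
  set T : ℝ := (p : ℝ) * h with hT
  have hT0 : 0 < T := by positivity
  have hUD : UniqueDiffOn ℝ (Set.Icc (0:ℝ) T) := uniqueDiffOn_Icc hT0
  have h0T : (0:ℝ) ∈ Set.Icc (0:ℝ) T := Set.mem_Icc.mpr ⟨le_rfl, le_of_lt hT0⟩
  have hmem : ∀ j : Fin m, ((j:ℝ) * h) ∈ Set.Icc (0:ℝ) T := by
    intro j
    constructor
    · positivity
    · rw [hT]
      have : (j:ℝ) ≤ (p:ℝ) := by exact_mod_cast Nat.lt_succ_iff.mp j.isLt
      nlinarith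
  -- Taylor remainder bound
  set P : ℝ → ℂ := fun x => ∑ t ∈ range m, (((t.factorial :ℝ))⁻¹ * x ^ t) • iteratedDeriv t g 0 with hP
  have hRbound : ∀ j : Fin m, ‖g ((j:ℝ)*h) - P ((j:ℝ)*h)‖ ≤ B * ((m:ℝ)^m * h^m) := by
    intro j
    have htay := taylor_mean_remainder_bound (f := g) (a := 0) (b := T) (C := B)
      (x := (j:ℝ)*h) (n := p) (le_of_lt hT0)
      (hg.contDiffOn)
      (hmem j)
      (fun y hy => by
        rw [idw_eq hg hUD hy le_rfl]
        exact hm' y hy.1)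
    have hPeq : taylorWithinEval g p (Set.Icc 0 T) 0 ((j:ℝ)*h) = P ((j:ℝ)*h) := by
      rw [taylor_within_apply, hP]
      refine Finset.sum_congr rfl fun t ht => ?_
      have ht' : t ≤ p := Nat.lt_succ_iff.mp (Finset.mem_range.mp ht)
      rw [idw_eq hg hUD h0T (by omega : t ≤ m)]
      ring_nf
    rw [hPeq] at htay
    refine htay.trans ?_
    rw [sub_zero]
    have h1 : ((j:ℝ)*h)^(p+1) ≤ ((m:ℝ))^m * h^m := by
      have hj : (j:ℝ) ≤ (m:ℝ) := by exact_mod_cast le_of_lt j.isLt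
      have : ((j:ℝ)*h)^m ≤ ((m:ℝ)*h)^m := by
        apply pow_le_pow_left₀ (by positivity) (by nlinarith)
      calc ((j:ℝ)*h)^(p+1) = ((j:ℝ)*h)^m := rfl
        _ ≤ ((m:ℝ)*h)^m := this
        _ = (m:ℝ)^m * h^m := mul_pow _ _ _
    have h2 : (1:ℝ) ≤ (p.factorial : ℝ) := by exact_mod_cast p.factorial_pos
    calc B * ((j:ℝ)*h)^(p+1) / (p.factorial:ℝ) ≤ B * ((j:ℝ)*h)^(p+1) / 1 := by
          apply div_le_div_of_nonneg_left (by positivity) one_pos h2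
      _ = B * ((j:ℝ)*h)^(p+1) := by ring
      _ ≤ B * ((m:ℝ)^m * h^m) := by nlinarith [pow_nonneg (by positivity : (0:ℝ) ≤ (j:ℝ)*h) (p+1)]
  -- key algebraic identity
  have hsumP : ∑ j : Fin m, c j • P ((j:ℝ)*h) = (h ^ k : ℝ) • iteratedDeriv k g 0 := by
    rw [hP]
    simp only [Finset.smul_sum, smul_smul]
    rw [Finset.sum_comm]
    have : ∀ t ∈ range m, ∑ j : Fin m, (c j * (((t.factorial:ℝ))⁻¹ * ((j:ℝ)*h) ^ t)) • iteratedDeriv t g 0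
        = (if t = k then h^k else 0) • iteratedDeriv t g 0 := by
      intro t ht
      rw [← Finset.sum_smul]
      congr 1
      have : ∑ j : Fin m, c j * (((t.factorial:ℝ))⁻¹ * ((j:ℝ)*h) ^ t)
          = ((t.factorial:ℝ))⁻¹ * h^t * ∑ j : Fin m, c j * (j:ℝ)^t := by
        rw [Finset.mul_sum]
        refine Finset.sum_congr rfl fun j _ => ?_
        rw [mul_pow]; ring
      rw [this, hc t (mem_range.mp ht)]
      split_ifs with hik
      · subst hik
        field_simp
      · ring
    rw [Finset.sum_congr rfl this]
    simp only [ite_smul, zero_smul]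
    rw [Finset.sum_ite_eq' (range m) k]
    rw [if_pos (mem_range.mpr hkm)]
  have hkey : (h ^ k : ℝ) • iteratedDeriv k g 0
      = ∑ j : Fin m, c j • g ((j:ℝ)*h) - ∑ j : Fin m, c j • (g ((j:ℝ)*h) - P ((j:ℝ)*h)) := by
    rw [← hsumP, ← Finset.sum_sub_distrib]
    refine Finset.sum_congr rfl fun j _ => ?_
    rw [← smul_sub, sub_sub_cancel]
  have hhk : 0 < h ^ k := pow_pos hh k
  have h1 : h ^ k * ‖iteratedDeriv k g 0‖ ≤ S * A + S * (B * ((m:ℝ)^m * h^m)) := by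
    have e0 : ‖(h ^ k : ℝ) • iteratedDeriv k g 0‖ = h ^ k * ‖iteratedDeriv k g 0‖ := by
      rw [norm_smul, Real.norm_eq_abs, abs_of_pos hhk]
    rw [← e0, hkey]
    refine (norm_sub_le _ _).trans ?_
    have e1 : ‖∑ j : Fin m, c j • g ((j:ℝ)*h)‖ ≤ S * A := by
      refine (norm_sum_le _ _).trans ?_
      rw [hS, Finset.sum_mul]
      refine Finset.sum_le_sum fun j _ => ?_
      rw [norm_smul, Real.norm_eq_abs]
      exact mul_le_mul_of_nonneg_left (h0 _ (by positivity)) (abs_nonneg _)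
    have e2 : ‖∑ j : Fin m, c j • (g ((j:ℝ)*h) - P ((j:ℝ)*h))‖ ≤ S * (B * ((m:ℝ)^m * h^m)) := by
      refine (norm_sum_le _ _).trans ?_
      rw [hS, Finset.sum_mul]
      refine Finset.sum_le_sum fun j _ => ?_
      rw [norm_smul, Real.norm_eq_abs]
      refine mul_le_mul_of_nonneg_left ?_ (abs_nonneg _)
      have := hRbound j
      calc ‖g ((j:ℝ)*h) - P ((j:ℝ)*h)‖ ≤ B * ((m:ℝ)^m * h^m) := hRbound j
        _ = B * ((m:ℝ)^m * h^m) := rfl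
    linarith
  rw [← mul_le_mul_iff_of_pos_right hhk]
  have e3 : K * (A / h ^ k + B * h ^ (m - k)) * h ^ k = K * A + K * B * h ^ m := by
    have e4 : h ^ (m - k) * h ^ k = h ^ m := by
      rw [← pow_add, Nat.sub_add_cancel hk]
    calc K * (A / h ^ k + B * h ^ (m - k)) * h ^ k
        = K * (A / h ^ k * h ^ k) + K * B * (h ^ (m - k) * h ^ k) := by ring
      _ = K * A + K * B * h ^ m := by rw [div_mul_cancel₀ _ (ne_of_gt hhk), e4]
  rw [e3]
  have hSK1 : S ≤ K := by rw [hK]; nlinarith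
  have hSK2 : S * (m:ℝ)^m ≤ K := by rw [hK]; nlinarith
  have q1 : S * A ≤ K * A := mul_le_mul_of_nonneg_right hSK1 hA
  have q2 : S * (B * ((m:ℝ)^m * h^m)) ≤ K * B * h^m := by
    have hBh : 0 ≤ B * h ^ m := by positivity
    calc S * (B * ((m:ℝ)^m * h^m)) = (S * (m:ℝ)^m) * (B * h^m) := by ring
      _ ≤ K * (B * h^m) := mul_le_mul_of_nonneg_right hSK2 hBh
      _ = K * B * h^m := by ring
  calc ‖iteratedDeriv k g 0‖ * h ^ k = h ^ k * ‖iteratedDeriv k g 0‖ := mul_comm _ _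
    _ ≤ S * A + S * (B * ((m:ℝ)^m * h^m)) := h1
    _ ≤ K * A + K * B * h ^ m := by linarith

lemma one_le_jap {d : ℕ} (x : EuclideanSpace ℝ (Fin d)) : 1 ≤ jap x := by
  have h : Real.sqrt 1 ≤ Real.sqrt (1 + ‖x‖^2) :=
    Real.sqrt_le_sqrt (by nlinarith [sq_nonneg ‖x‖])
  rw [Real.sqrt_one] at h
  exact h

lemma jap_pos {d : ℕ} (x : EuclideanSpace ℝ (Fin d)) : 0 < jap x :=
  lt_of_lt_of_le one_pos (one_le_jap x)

lemma jap_mono {d : ℕ} {x y : EuclideanSpace ℝ (Fin d)} (h : ‖x‖^2 ≤ ‖y‖^2) : jap x ≤ jap y :=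
  Real.sqrt_le_sqrt (by linarith)

lemma pd_contDiff {d : ℕ} (i : Fin d) {f : EuclideanSpace ℝ (Fin d) → ℂ} {q : ℕ}
    (hf : ContDiff ℝ ((q:ℕ∞)+1) f) : ContDiff ℝ (q:ℕ∞) (pd i f) :=
  (hf.fderiv_right le_rfl).clm_apply contDiff_const

lemma pd_iter_contDiff {d : ℕ} (i : Fin d) {f : EuclideanSpace ℝ (Fin d) → ℂ} {m : ℕ}
    (hf : ContDiff ℝ (m:ℕ∞) f) : ∀ j, j ≤ m → ContDiff ℝ ((m - j : ℕ) : ℕ∞) ((pd i)^[j] f) := by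
  intro j
  induction j with
  | zero => intro _; simpa using hf
  | succ j IH =>
    intro hj
    rw [Function.iterate_succ_apply']
    have h1 : ContDiff ℝ ((m - j : ℕ) : ℕ∞) ((pd i)^[j] f) := IH (by omega)
    have h2 : (m - j : ℕ) = (m - (j+1)) + 1 := by omega
    apply pd_contDiff
    rw [h2] at h1
    exact_mod_cast h1

lemma line_hasDerivAt {d : ℕ} (x e : EuclideanSpace ℝ (Fin d)) (t : ℝ) :
    HasDerivAt (fun t : ℝ => x + t • e) e t := by
  have h1 : HasDerivAt (fun t : ℝ => t • e) ((1:ℝ) • e) t := (hasDerivAt_id t).smul_const e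
  simpa using h1.const_add x

lemma deriv_line {d : ℕ} (f : EuclideanSpace ℝ (Fin d) → ℂ) (hf : Differentiable ℝ f)
    (x e : EuclideanSpace ℝ (Fin d)) (t : ℝ) :
    deriv (fun t : ℝ => f (x + t • e)) t = fderiv ℝ f (x + t • e) e :=
  ((hf _).hasFDerivAt.comp_hasDerivAt t (line_hasDerivAt x e t)).deriv

lemma line_contDiff {d : ℕ} {f : EuclideanSpace ℝ (Fin d) → ℂ} {n : ℕ∞}
    (hf : ContDiff ℝ n f) (x e : EuclideanSpace ℝ (Fin d)) :
    ContDiff ℝ n (fun t : ℝ => f (x + t • e)) :=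
  hf.comp ((contDiff_const (c := x)).add (contDiff_id.smul contDiff_const))

lemma iter_line {d : ℕ} (i : Fin d) (f : EuclideanSpace ℝ (Fin d) → ℂ) {m : ℕ}
    (hf : ContDiff ℝ (m:ℕ∞) f) (x : EuclideanSpace ℝ (Fin d)) (ε : ℝ) :
    ∀ q, q ≤ m → ∀ t : ℝ,
      iteratedDeriv q (fun t : ℝ => f (x + t • (ε • EuclideanSpace.single i 1))) t
        = ε ^ q • (pd i)^[q] f (x + t • (ε • EuclideanSpace.single i 1)) := by
  set e := ε • EuclideanSpace.single i (1:ℝ) with he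
  intro q
  induction q with
  | zero => intro _ t; simp
  | succ q IH =>
    intro hq t
    rw [iteratedDeriv_succ]
    have e1 : iteratedDeriv q (fun t : ℝ => f (x + t • e)) = fun t => ε ^ q • (pd i)^[q] f (x + t • e) :=
      funext (IH (by omega))
    rw [e1]
    set F := (pd i)^[q] f with hF
    have hFc : ContDiff ℝ ((m - q : ℕ) : ℕ∞) F := pd_iter_contDiff i hf q (by omega)
    have hFd : Differentiable ℝ F := by
      apply hFc.differentiable
      have : (1:ℕ) ≤ m - q := by omega
      exact_mod_cast (show m - q ≠ 0 by omega)
    have hdconst : deriv (fun t : ℝ => ε ^ q • F (x + t • e)) t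
        = ε ^ q • deriv (fun t : ℝ => F (x + t • e)) t := by
      apply deriv_fun_const_smul
      exact ((hFd _).hasFDerivAt.comp_hasDerivAt t (line_hasDerivAt x e t)).differentiableAt
    rw [hdconst, deriv_line F hFd x e t]
    rw [he]
    rw [(fderiv ℝ F (x + t • e)).map_smul]
    rw [smul_smul, ← pow_succ, Function.iterate_succ_apply' (pd i) q f]
    rfl

lemma jap_ray {d : ℕ} (i : Fin d) (x : EuclideanSpace ℝ (Fin d)) (t : ℝ) (ht : 0 ≤ t) :
    jap x ≤ jap (x + t • ((if 0 ≤ x i then (1:ℝ) else -1) • EuclideanSpace.single i 1)) := by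
  set ε : ℝ := if 0 ≤ x i then (1:ℝ) else -1 with hε
  apply jap_mono
  have key : 0 ≤ (inner ℝ x (t • (ε • EuclideanSpace.single i (1:ℝ))) : ℝ) := by
    rw [real_inner_smul_right, real_inner_smul_right]
    have : (inner ℝ x (EuclideanSpace.single i (1:ℝ)) : ℝ) = x i := by
      rw [EuclideanSpace.inner_single_right]
      simp
    rw [this]
    have : 0 ≤ ε * x i := by
      rw [hε]; split_ifs with h
      · simpa using h
      · simp only [neg_mul]; push_neg at h; nlinarith
    positivity
  have hsq : ‖x‖^2 ≤ ‖x + t • (ε • EuclideanSpace.single i (1:ℝ))‖^2 := by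
    rw [norm_add_sq_real]
    nlinarith [sq_nonneg ‖t • (ε • EuclideanSpace.single i (1:ℝ))‖]
  exact hsq

lemma coord {d : ℕ} (i : Fin d) (m k : ℕ) (hk : k ≤ m) (f : EuclideanSpace ℝ (Fin d) → ℂ)
    (hf : ContDiff ℝ (m:ℕ∞) f) (a b A B : ℝ) (ha : 0 ≤ a) (hb : 0 ≤ b)
    (hA : ∀ x, jap x ^ a * ‖f x‖ ≤ A) (hB : ∀ x, jap x ^ b * ‖(pd i)^[m] f x‖ ≤ B) :
    ∃ C : ℝ, ∀ x, jap x ^ (a + ((k:ℝ)/(m:ℝ))*(b-a)) * ‖(pd i)^[k] f x‖ ≤ C := by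
  rcases Nat.eq_zero_or_pos m with rfl | hm
  · -- m = 0, k = 0
    obtain rfl : k = 0 := Nat.le_zero.mp hk
    refine ⟨A, fun x => ?_⟩
    simpa using hA x
  obtain ⟨K, hK0, hK⟩ := oneD m k hm hk
  have hA0 : 0 ≤ A := by
    have := hA 0
    have h1 : 0 ≤ jap (0 : EuclideanSpace ℝ (Fin d)) ^ a * ‖f 0‖ := by
      have := jap_pos (0 : EuclideanSpace ℝ (Fin d))
      positivity
    linarith
  have hB0 : 0 ≤ B := by
    have := hB 0
    have h1 : 0 ≤ jap (0 : EuclideanSpace ℝ (Fin d)) ^ b * ‖(pd i)^[m] f 0‖ := by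
      have := jap_pos (0 : EuclideanSpace ℝ (Fin d))
      positivity
    linarith
  refine ⟨K * (A + B), fun x => ?_⟩
  set ε : ℝ := if 0 ≤ x i then (1:ℝ) else -1 with hε
  have hεabs : |ε| = 1 := by rw [hε]; split_ifs <;> simp
  set e : EuclideanSpace ℝ (Fin d) := ε • EuclideanSpace.single i 1 with he
  set g : ℝ → ℂ := fun t => f (x + t • e) with hg
  have hgc : ContDiff ℝ (m:ℕ∞) g := line_contDiff hf x e
  set J : ℝ := jap x with hJ
  have hJ1 : 1 ≤ J := one_le_jap x
  have hJ0 : 0 < J := jap_pos x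
  set h : ℝ := J ^ ((b - a)/(m:ℝ)) with hh'
  have hh : 0 < h := Real.rpow_pos_of_pos hJ0 _
  -- bounds along the ray
  have hray : ∀ t : ℝ, 0 ≤ t → J ≤ jap (x + t • e) := fun t ht => jap_ray i x t ht
  have hA' : ∀ t : ℝ, 0 ≤ t → ‖g t‖ ≤ A / J ^ a := by
    intro t ht
    have h1 := hA (x + t • e)
    have h2 : J ^ a ≤ jap (x + t • e) ^ a :=
      Real.rpow_le_rpow (le_of_lt hJ0) (hray t ht) ha
    have h3 : 0 < jap (x + t • e) ^ a := Real.rpow_pos_of_pos (jap_pos _) _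
    have h4 : ‖g t‖ ≤ A / jap (x + t • e) ^ a := by
      rw [le_div_iff₀ h3]; rw [hg]; linarith [h1]
    refine h4.trans ?_
    apply div_le_div_of_nonneg_left hA0 (Real.rpow_pos_of_pos hJ0 _) h2
  have hB' : ∀ t : ℝ, 0 ≤ t → ‖iteratedDeriv m g t‖ ≤ B / J ^ b := by
    intro t ht
    have hit := iter_line i f hf x ε m le_rfl t
    have hnorm : ‖iteratedDeriv m g t‖ = ‖(pd i)^[m] f (x + t • e)‖ := by
      rw [hg, he] at *
      rw [hit, norm_smul, Real.norm_eq_abs, abs_pow, hεabs, one_pow, one_mul]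
    rw [hnorm]
    have h1 := hB (x + t • e)
    have h2 : J ^ b ≤ jap (x + t • e) ^ b :=
      Real.rpow_le_rpow (le_of_lt hJ0) (hray t ht) hb
    have h3 : 0 < jap (x + t • e) ^ b := Real.rpow_pos_of_pos (jap_pos _) _
    have h4 : ‖(pd i)^[m] f (x + t • e)‖ ≤ B / jap (x + t • e) ^ b := by
      rw [le_div_iff₀ h3]; linarith [h1]
    exact h4.trans (div_le_div_of_nonneg_left hB0 (Real.rpow_pos_of_pos hJ0 _) h2)
  have hmain := hK g (A / J ^ a) (B / J ^ b) h hgc hh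
    (by positivity) (by positivity) hA' hB'
  have hD : ‖(pd i)^[k] f x‖ = ‖iteratedDeriv k g 0‖ := by
    have hit := iter_line i f hf x ε k hk 0
    rw [hg, he] at *
    rw [hit, norm_smul, Real.norm_eq_abs, abs_pow, hεabs, one_pow, one_mul]
    norm_num
  -- rpow arithmetic
  have hm0 : (m:ℝ) ≠ 0 := Nat.cast_ne_zero.mpr (Nat.pos_iff_ne_zero.mp hm)
  have hpow1 : h ^ k = J ^ (((b - a)/(m:ℝ)) * k) := by
    rw [hh', ← Real.rpow_natCast (J ^ ((b - a)/(m:ℝ))) k, ← Real.rpow_mul (le_of_lt hJ0)]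
  have hpow2 : h ^ (m - k) = J ^ (((b - a)/(m:ℝ)) * ((m:ℝ) - (k:ℝ))) := by
    rw [hh', ← Real.rpow_natCast (J ^ ((b - a)/(m:ℝ))) (m - k), ← Real.rpow_mul (le_of_lt hJ0)]
    congr 1
    rw [Nat.cast_sub hk]
  set ν : ℝ := a + ((k:ℝ)/(m:ℝ))*(b-a) with hν
  have key1 : J ^ ν * (A / J ^ a / h ^ k) = A := by
    rw [hpow1]
    have : J ^ a * J ^ (((b - a)/(m:ℝ)) * k) = J ^ ν := by
      rw [← Real.rpow_add hJ0]
      congr 1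
      rw [hν]; field_simp
    rw [div_div, this, mul_div_cancel₀]
    exact ne_of_gt (Real.rpow_pos_of_pos hJ0 _)
  have key2 : J ^ ν * (B / J ^ b * h ^ (m - k)) = B := by
    rw [hpow2]
    have : J ^ ν * J ^ (((b - a)/(m:ℝ)) * ((m:ℝ) - (k:ℝ))) = J ^ b := by
      rw [← Real.rpow_add hJ0]
      congr 1
      rw [hν]; field_simp; ring
    calc J ^ ν * (B / J ^ b * J ^ (((b - a)/(m:ℝ)) * ((m:ℝ) - (k:ℝ))))
        = B * (J ^ ν * J ^ (((b - a)/(m:ℝ)) * ((m:ℝ) - (k:ℝ)))) / J ^ b := by ring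
      _ = B * J ^ b / J ^ b := by rw [this]
      _ = B := by field_simp
  have hJν : 0 ≤ J ^ ν := le_of_lt (Real.rpow_pos_of_pos hJ0 _)
  calc J ^ ν * ‖(pd i)^[k] f x‖ = J ^ ν * ‖iteratedDeriv k g 0‖ := by rw [hD]
    _ ≤ J ^ ν * (K * (A / J ^ a / h ^ k + B / J ^ b * h ^ (m - k))) := by
        exact mul_le_mul_of_nonneg_left hmain hJν
    _ = K * (J ^ ν * (A / J ^ a / h ^ k) + J ^ ν * (B / J ^ b * h ^ (m - k))) := by ring
    _ = K * (A + B) := by rw [key1, key2]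

section lists
variable {d : ℕ} (α β : Fin d → ℕ) (u : EuclideanSpace ℝ (Fin d) → ℂ)

lemma foldr_congr_lemma : ∀ L : List (Fin d), (∀ t ∈ L, α t = β t) →
    L.foldr (fun i g => (pd i)^[α i] g) u = L.foldr (fun i g => (pd i)^[β i] g) u := by
  intro L
  induction L with
  | nil => intro _; rfl
  | cons hd tl IH =>
    intro hL
    simp only [List.foldr_cons]
    rw [IH (fun t ht => hL t (List.mem_cons_of_mem _ ht)), hL hd (List.mem_cons_self)]

lemma foldr_id_lemma : ∀ L : List (Fin d), (∀ t ∈ L, α t = 0) → ∀ v,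
    L.foldr (fun i g => (pd i)^[α i] g) v = v := by
  intro L
  induction L with
  | nil => intro _ v; rfl
  | cons hd tl IH =>
    intro hL v
    simp only [List.foldr_cons]
    rw [IH (fun t ht => hL t (List.mem_cons_of_mem _ ht)), hL hd (List.mem_cons_self)]
    rfl

lemma mem_take_finRange {j : ℕ} {t : Fin d} (h : t ∈ List.take j (List.finRange d)) :
    (t : ℕ) < j := by
  obtain ⟨n, hn, rfl⟩ := List.mem_iff_getElem.mp h
  have hn' : n < j := by
    have := hn
    simp only [List.length_take, List.length_finRange] at this
    omega
  simp only [List.getElem_take, List.getElem_finRange]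
  simpa using hn'

lemma mem_drop_finRange {j : ℕ} {t : Fin d} (h : t ∈ List.drop j (List.finRange d)) :
    j ≤ (t : ℕ) := by
  obtain ⟨n, hn, rfl⟩ := List.mem_iff_getElem.mp h
  simp only [List.getElem_drop, List.getElem_finRange]
  simp

lemma mderiv_eq_drop {j : ℕ} (hsupp : ∀ t : Fin d, (t : ℕ) < j → α t = 0) :
    mderiv α u = (List.drop j (List.finRange d)).foldr (fun i g => (pd i)^[α i] g) u := by
  rw [mderiv, ← List.take_append_drop j (List.finRange d), List.foldr_append]
  rw [List.take_append_drop]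
  exact foldr_id_lemma α (List.take j (List.finRange d))
    (fun t ht => hsupp t (mem_take_finRange ht)) _

lemma mderiv_split {j : ℕ} (hj : j < d) (hsupp : ∀ t : Fin d, (t : ℕ) < j → α t = 0) :
    mderiv α u = (pd ⟨j, hj⟩)^[α ⟨j, hj⟩]
      (mderiv (Function.update α ⟨j, hj⟩ 0) u) := by
  set jF : Fin d := ⟨j, hj⟩ with hjF
  have hlen : j < (List.finRange d).length := by simp [hj]
  have hdrop : List.drop j (List.finRange d) = jF :: List.drop (j+1) (List.finRange d) := by
    rw [List.drop_eq_getElem_cons hlen]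
    congr 1
    simp [hjF]
  rw [mderiv_eq_drop α u hsupp, hdrop]
  simp only [List.foldr_cons]
  congr 1
  have hsupp' : ∀ t : Fin d, (t : ℕ) < j + 1 → (Function.update α jF 0) t = 0 := by
    intro t ht
    by_cases htj : t = jF
    · rw [htj, Function.update_self]
    · rw [Function.update_of_ne htj]
      apply hsupp
      have : (t:ℕ) ≠ j := fun hc => htj (Fin.ext hc)
      omega
  rw [mderiv_eq_drop _ u hsupp']
  apply foldr_congr_lemma
  intro t ht
  have := mem_drop_finRange ht
  rw [Function.update_of_ne]
  intro hc
  rw [hc] at this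
  simp [hjF] at this

lemma mderiv_contDiff {n : ℕ} (hu : ContDiff ℝ (n:ℕ∞) u) :
    ∀ L : List (Fin d), (L.map α).sum ≤ n →
      ContDiff ℝ ((n - (L.map α).sum : ℕ) : ℕ∞) (L.foldr (fun i g => (pd i)^[α i] g) u) := by
  intro L
  induction L with
  | nil => intro _; simpa using hu
  | cons hd tl IH =>
    intro hL
    simp only [List.map_cons, List.sum_cons] at hL ⊢
    simp only [List.foldr_cons]
    have h1 := IH (by omega)
    have h2 := pd_iter_contDiff hd h1 (α hd) (by omega)
    have : (n - (tl.map α).sum - α hd) = n - (α hd + (tl.map α).sum) := by omega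
    rwa [this] at h2

lemma mderiv_contDiff' {n : ℕ} (hu : ContDiff ℝ (n:ℕ∞) u) (h : (∑ i, α i) ≤ n) :
    ContDiff ℝ ((n - (∑ i, α i) : ℕ) : ℕ∞) (mderiv α u) := by
  have he : (∑ i, α i) = ((List.finRange d).map α).sum := Fin.sum_univ_def α
  rw [mderiv, he]
  exact mderiv_contDiff α u hu _ (he ▸ h)
end lists

lemma main_aux {d n : ℕ} {u : EuclideanSpace ℝ (Fin d) → ℂ} (hu : ContDiff ℝ (n:ℕ∞) u)
    {s r : ℝ} (hs : 0 ≤ s) (hr : 0 ≤ r) {Cu Cn : ℝ}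
    (h0 : ∀ x, jap x ^ s * ‖u x‖ ≤ Cu)
    (hn : ∀ α : Fin d → ℕ, (∑ i, α i) = n → ∀ x, jap x ^ r * ‖mderiv α u x‖ ≤ Cn) :
    ∀ (p j : ℕ), j + p = d → ∀ α : Fin d → ℕ, (∀ t : Fin d, (t:ℕ) < j → α t = 0) →
      (∑ i, α i) ≤ n →
      ∃ C, ∀ x, jap x ^ ((1 - ((∑ i, α i : ℕ):ℝ)/(n:ℝ)) * s + (((∑ i, α i : ℕ):ℝ)/(n:ℝ)) * r)
        * ‖mderiv α u x‖ ≤ C := by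
  intro p
  induction p with
  | zero =>
    intro j hj α hsupp hsum
    have hα : ∀ t : Fin d, α t = 0 := fun t => hsupp t (by omega)
    have hsum0 : (∑ i, α i) = 0 := Finset.sum_eq_zero fun i _ => hα i
    have hmd : mderiv α u = u := by
      rw [mderiv]; exact foldr_id_lemma α _ (fun t _ => hα t) u
    refine ⟨Cu, fun x => ?_⟩
    rw [hmd, hsum0]
    have hexp : (1 - ((0:ℕ):ℝ)/(n:ℝ)) * s + (((0:ℕ):ℝ)/(n:ℝ)) * r = s := by
      norm_num
    rw [hexp]
    exact h0 x
  | succ p IH =>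
    intro j hj α hsupp hsum
    have hjd : j < d := by omega
    set jF : Fin d := ⟨j, hjd⟩ with hjF
    set β := Function.update α jF 0 with hβ
    have hβjF : β jF = 0 := by rw [hβ, Function.update_self]
    have hβsupp : ∀ t : Fin d, (t:ℕ) < j + 1 → β t = 0 := by
      intro t ht
      by_cases htj : t = jF
      · rw [htj]; exact hβjF
      · rw [hβ, Function.update_of_ne htj]
        apply hsupp
        have : (t:ℕ) ≠ j := fun hc => htj (Fin.ext hc)
        omega
    have hβsum_eq : (∑ i, β i) + α jF = ∑ i, α i := by
      have h1 : ∑ i, β i = 0 + ∑ i ∈ univ \ {jF}, α i := by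
        rw [hβ]; exact Finset.sum_update_of_mem (Finset.mem_univ jF) α 0
      have h2 : ∑ i, α i = (∑ i ∈ univ \ {jF}, α i) + α jF :=
        Finset.sum_eq_sum_sdiff_singleton_add (Finset.mem_univ jF) α
      omega
    set σβ := ∑ i, β i with hσβ
    have hσβn : σβ ≤ n := by omega
    set m := n - σβ with hm
    have hk : α jF ≤ m := by omega
    have hfβ : ContDiff ℝ (m:ℕ∞) (mderiv β u) := mderiv_contDiff' β u hu hσβn
    obtain ⟨C₁, hC₁⟩ := IH (j+1) (by omega) β hβsupp (by omega)
    set γ := Function.update β jF m with hγ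
    have hγsum : (∑ i, γ i) = n := by
      have h1 : ∑ i, γ i = m + ∑ i ∈ univ \ {jF}, β i := by
        rw [hγ]; exact Finset.sum_update_of_mem (Finset.mem_univ jF) β m
      have h2 : σβ = (∑ i ∈ univ \ {jF}, β i) + β jF :=
        Finset.sum_eq_sum_sdiff_singleton_add (Finset.mem_univ jF) β
      omega
    have hγsupp : ∀ t : Fin d, (t:ℕ) < j → γ t = 0 := by
      intro t ht
      have htj : t ≠ jF := by
        intro hc; rw [hc] at ht; simp [hjF] at ht
      rw [hγ, Function.update_of_ne htj, hβ, Function.update_of_ne htj]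
      exact hsupp t ht
    have hmd_top : (pd jF)^[m] (mderiv β u) = mderiv γ u := by
      rw [mderiv_split γ u hjd hγsupp]
      have e1 : γ jF = m := by rw [hγ]; exact Function.update_self jF m β
      have e2 : Function.update γ jF 0 = β := by
        rw [hγ, Function.update_idem]
        exact Function.update_eq_self_iff.mpr hβjF.symm
      rw [e1, e2]
    have hB : ∀ x, jap x ^ r * ‖(pd jF)^[m] (mderiv β u) x‖ ≤ Cn := by
      intro x; rw [hmd_top]; exact hn γ hγsum x
    set Lβ : ℝ := (1 - (σβ:ℝ)/(n:ℝ)) * s + ((σβ:ℝ)/(n:ℝ)) * r with hLβ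
    have haLβ : 0 ≤ Lβ := by
      rcases Nat.eq_zero_or_pos n with hn0 | hn0
      · have hσ0 : σβ = 0 := by omega
        rw [hLβ, hσ0, hn0]
        norm_num [hs]
      · have h1 : (σβ:ℝ)/(n:ℝ) ≤ 1 := by
          rw [div_le_one (by exact_mod_cast hn0)]
          exact_mod_cast hσβn
        have h2 : 0 ≤ (σβ:ℝ)/(n:ℝ) := by positivity
        rw [hLβ]
        nlinarith
    obtain ⟨C, hC⟩ := coord jF m (α jF) hk (mderiv β u) hfβ Lβ r C₁ Cn haLβ hr hC₁ hB
    refine ⟨C, fun x => ?_⟩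
    have hmda : mderiv α u = (pd jF)^[α jF] (mderiv β u) := mderiv_split α u hjd hsupp
    have hexp : (1 - ((∑ i, α i : ℕ):ℝ)/(n:ℝ)) * s + (((∑ i, α i : ℕ):ℝ)/(n:ℝ)) * r
        = Lβ + ((α jF : ℝ)/(m:ℝ)) * (r - Lβ) := by
      have hcastα : ((∑ i, α i : ℕ):ℝ) = (σβ:ℝ) + (α jF:ℝ) := by
        rw [← hβsum_eq]; push_cast; ring
      rcases Nat.eq_zero_or_pos m with hm0 | hm0
      · have hα0 : α jF = 0 := by omega
        have hσα : (∑ i, α i) = σβ := by omega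
        rw [hσα, hα0, hLβ]
        norm_num
      · have hn0 : 0 < n := by omega
        have hcastm : (m:ℝ) = (n:ℝ) - (σβ:ℝ) := by
          rw [hm]; rw [Nat.cast_sub hσβn]
        have hne1 : (n:ℝ) ≠ 0 := by positivity
        have hne2 : (m:ℝ) ≠ 0 := by positivity
        rw [hLβ, hcastα]
        rw [hcastm] at hne2 ⊢
        field_simp
        ring
    rw [hmda, hexp]
    exact hC x

/-- Weighted interpolation: if `⟨x⟩^s u` and `⟨x⟩^r ∂^α u` (`|α| = n`) are bounded, then
`⟨x⟩^ν ∂^α u` is bounded for `|α| = ℓ`, with `ν = (1-ℓ/n)s + (ℓ/n)r`. -/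
theorem weighted_interpolation_derivatives (d ℓ n : ℕ) (hln : ℓ ≤ n)
    (u : EuclideanSpace ℝ (Fin d) → ℂ) (hu : ContDiff ℝ n u)
    (s r : ℝ) (hs : 0 ≤ s) (hr : 0 ≤ r) (Cu Cn : ℝ)
    (h0 : ∀ x, jap x ^ s * ‖u x‖ ≤ Cu)
    (hn : ∀ α : Fin d → ℕ, (∑ i, α i) = n → ∀ x, jap x ^ r * ‖mderiv α u x‖ ≤ Cn) :
    ∀ α : Fin d → ℕ, (∑ i, α i) = ℓ →
      ∃ C : ℝ, ∀ x, jap x ^ ((1 - (ℓ : ℝ) / n) * s + ((ℓ : ℝ) / n) * r) * ‖mderiv α u x‖ ≤ C := by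
  intro α hα
  obtain ⟨C, hC⟩ := main_aux hu hs hr h0 hn d 0 (by omega) α
    (fun t ht => absurd ht (Nat.not_lt_zero _)) (by omega)
  refine ⟨C, fun x => ?_⟩
  have h := hC x
  rwa [hα] at h

end WeightedInterp
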